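/- arXiv:1505.03123 — 2 statements merged into one kernel-verified Lean document; each statement's English description precedes it below -/
import Mathlib

section
/- Let g̃ be a smooth Lorentzian metric on an open set M ⊂ ℝⁿ, let a : M → (0,∞) be smooth, and set g = a² g̃. Let c : M → ℝ be smooth and let ω be a smooth 1-form on M. Then a⁻²(c g + d^s ω) = c̃ g̃ + d̃^s ω̃ as symmetric 2-tensor fields, where ω̃ = a⁻² ω and c̃ = c + Σ_{i,j} g̃^{ij} ω̃_i ∂_{x^j}(log a), and where d^s and d̃^s denote the symmetric differentials with respect to g and g̃ respectively. -/
noncomputable section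

/-- Partial derivative `∂_{x^i} f (x)` of a scalar function on `ℝⁿ`. -/
def pd {n : ℕ} (i : Fin n) (f : (Fin n → ℝ) → ℝ) (x : Fin n → ℝ) : ℝ :=
  fderiv ℝ f x (Pi.single i 1)

/-- Christoffel symbols `Γ^k_{ij}` of a metric `g`, using the matrix inverse `(g x)⁻¹`. -/
def christoffel {n : ℕ} (g : (Fin n → ℝ) → Matrix (Fin n) (Fin n) ℝ)
    (k i j : Fin n) (x : Fin n → ℝ) : ℝ :=
  (1 / 2) * ∑ m, (g x)⁻¹ k m *
    (pd i (fun y => g y m j) x + pd j (fun y => g y m i) x - pd m (fun y => g y i j) x)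

/-- The diagonal matrix `diag(-1, 1, …, 1)`. -/
def minkMat (n : ℕ) : Matrix (Fin n) (Fin n) ℝ :=
  Matrix.diagonal (fun i => if (i : ℕ) = 0 then (-1 : ℝ) else 1)

/-- `g` is a smooth Lorentzian metric on the open set `M ⊆ ℝⁿ`: smooth, symmetric,
invertible, and of signature `(-,+,…,+)` (i.e. congruent to `diag(-1,1,…,1)`). -/
def IsLorentzMetricOn {n : ℕ} (M : Set (Fin n → ℝ))
    (g : (Fin n → ℝ) → Matrix (Fin n) (Fin n) ℝ) : Prop :=
  (∀ i j, ContDiffOn ℝ (⊤ : ℕ∞) (fun x => g x i j) M) ∧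
  (∀ x ∈ M, (g x).IsSymm) ∧
  (∀ x ∈ M, IsUnit (g x).det) ∧
  (∀ x ∈ M, ∃ P : Matrix (Fin n) (Fin n) ℝ, IsUnit P.det ∧ g x = P.transpose * minkMat n * P)

/-- The symmetric differential `(d^s ω)_{ij} = ½(∂_i ω_j + ∂_j ω_i) − Γ^k_{ij} ω_k`
of a 1-form `ω` with respect to the metric `g`. -/
def symDer {n : ℕ} (g : (Fin n → ℝ) → Matrix (Fin n) (Fin n) ℝ)
    (ω : Fin n → (Fin n → ℝ) → ℝ) (i j : Fin n) (x : Fin n → ℝ) : ℝ :=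
  (1 / 2) * (pd i (ω j) x + pd j (ω i) x) - ∑ k, christoffel g k i j x * ω k x

lemma pd_mul {n : ℕ} (i : Fin n) {f h : (Fin n → ℝ) → ℝ} {x : Fin n → ℝ}
    (hf : DifferentiableAt ℝ f x) (hh : DifferentiableAt ℝ h x) :
    pd i (fun y => f y * h y) x = f x * pd i h x + pd i f x * h x := by
  unfold pd
  rw [fderiv_fun_mul hf hh]
  simp [mul_comm]

lemma pd_inv {n : ℕ} (i : Fin n) {f : (Fin n → ℝ) → ℝ} {x : Fin n → ℝ}
    (hf : DifferentiableAt ℝ f x) (hfx : f x ≠ 0) :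
    pd i (fun y => (f y)⁻¹) x = -(((f x)^2)⁻¹) * pd i f x := by
  unfold pd
  have h' : HasFDerivAt (fun y => (f y)⁻¹) ((-(f x ^ 2)⁻¹ : ℝ) • fderiv ℝ f x) x :=
    (hasDerivAt_inv hfx).comp_hasFDerivAt x hf.hasFDerivAt
  rw [h'.fderiv]
  simp

lemma pd_log {n : ℕ} (i : Fin n) {f : (Fin n → ℝ) → ℝ} {x : Fin n → ℝ}
    (hf : DifferentiableAt ℝ f x) (hfx : f x ≠ 0) :
    pd i (fun y => Real.log (f y)) x = (f x)⁻¹ * pd i f x := by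
  unfold pd
  have h' : HasFDerivAt (fun y => Real.log (f y)) (((f x)⁻¹ : ℝ) • fderiv ℝ f x) x :=
    (Real.hasDerivAt_log hfx).comp_hasFDerivAt x hf.hasFDerivAt
  rw [h'.fderiv]
  simp

/-- Let `g̃` be a smooth Lorentzian metric on an open `M ⊆ ℝⁿ`,
`a : M → (0,∞)` smooth, and `g = a² g̃`. For a smooth function `c` and smooth 1-form `ω`,
`a⁻²(c g + d^s ω) = c̃ g̃ + d̃^s ω̃` where `ω̃ = a⁻² ω` and
`c̃ = c + g̃^{ij} ω̃_i ∂_j (log a)`. -/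
theorem symDer_conformal_scaling {n : ℕ} (M : Set (Fin n → ℝ)) (hM : IsOpen M)
    (gt : (Fin n → ℝ) → Matrix (Fin n) (Fin n) ℝ)
    (hgt : IsLorentzMetricOn M gt)
    (a : (Fin n → ℝ) → ℝ) (ha : ContDiffOn ℝ (⊤ : ℕ∞) a M) (hapos : ∀ x ∈ M, 0 < a x)
    (g : (Fin n → ℝ) → Matrix (Fin n) (Fin n) ℝ)
    (hg : ∀ x, g x = (a x) ^ 2 • gt x)
    (c : (Fin n → ℝ) → ℝ) (hc : ContDiffOn ℝ (⊤ : ℕ∞) c M)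
    (ω : Fin n → (Fin n → ℝ) → ℝ) (hω : ∀ i, ContDiffOn ℝ (⊤ : ℕ∞) (ω i) M)
    (ωt : Fin n → (Fin n → ℝ) → ℝ) (hωt : ∀ i x, ωt i x = ((a x) ^ 2)⁻¹ * ω i x)
    (ct : (Fin n → ℝ) → ℝ)
    (hct : ∀ x, ct x = c x + ∑ i, ∑ j, (gt x)⁻¹ i j * ωt i x *
      pd j (fun y => Real.log (a y)) x) :
    ∀ x ∈ M, ∀ i j,
      ((a x) ^ 2)⁻¹ * (c x * g x i j + symDer g ω i j x)
        = ct x * gt x i j + symDer gt ωt i j x := by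
  obtain ⟨hgt1, hgt2, hgt3, hgt4⟩ := hgt
  intro x hx i j
  have hA : a x ≠ 0 := (hapos x hx).ne'
  have hA2 : (a x) ^ 2 ≠ 0 := pow_ne_zero 2 hA
  have hnb : M ∈ nhds x := hM.mem_nhds hx
  have ha' : DifferentiableAt ℝ a x :=
    (ha.contDiffAt hnb).differentiableAt (by simp)
  have hω' : ∀ k, DifferentiableAt ℝ (ω k) x :=
    fun k => ((hω k).contDiffAt hnb).differentiableAt (by simp)
  have hgt' : ∀ p q, DifferentiableAt ℝ (fun y => gt y p q) x :=
    fun p q => ((hgt1 p q).contDiffAt hnb).differentiableAt (by simp)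
  -- inverse of conformal metric
  have hginv : (g x)⁻¹ = ((a x)^2)⁻¹ • (gt x)⁻¹ := by
    apply Matrix.inv_eq_right_inv
    rw [hg, Matrix.smul_mul, Matrix.mul_smul, Matrix.mul_nonsing_inv _ (hgt3 x hx),
      smul_smul, mul_inv_cancel₀ hA2, one_smul]
  have hδ : ∀ k l, (∑ m, (gt x)⁻¹ k m * gt x m l) = (if k = l then (1:ℝ) else 0) := by
    intro k l
    rw [← Matrix.mul_apply, Matrix.nonsing_inv_mul _ (hgt3 x hx), Matrix.one_apply]
  -- derivative of conformal metric entries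
  have hpdg : ∀ (l p q : Fin n), pd l (fun y => g y p q) x
      = 2 * a x * pd l a x * gt x p q + (a x)^2 * pd l (fun y => gt y p q) x := by
    intro l p q
    have e : (fun y => g y p q) = fun y => (a y * a y) * gt y p q := by
      funext y; rw [hg]; simp only [Matrix.smul_apply, smul_eq_mul]; ring
    rw [e, pd_mul l (f := fun y => a y * a y) (hf := ha'.mul ha') (hh := hgt' p q), pd_mul l (hf := ha') (hh := ha')]
    ring
  -- Christoffel transformation
  have hChr : ∀ k, christoffel g k i j x = christoffel gt k i j x +
      (a x)⁻¹ * (pd i a x * (if k = j then (1:ℝ) else 0)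
        + pd j a x * (if k = i then (1:ℝ) else 0)
        - gt x i j * ∑ m, (gt x)⁻¹ k m * pd m a x) := by
    intro k
    have hterm : ∀ m, (g x)⁻¹ k m *
        (pd i (fun y => g y m j) x + pd j (fun y => g y m i) x - pd m (fun y => g y i j) x)
        = (gt x)⁻¹ k m *
          (pd i (fun y => gt y m j) x + pd j (fun y => gt y m i) x
            - pd m (fun y => gt y i j) x)
          + 2 * (a x)⁻¹ * (pd i a x * ((gt x)⁻¹ k m * gt x m j)
            + pd j a x * ((gt x)⁻¹ k m * gt x m i)
            - ((gt x)⁻¹ k m * pd m a x) * gt x i j) := by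
      intro m
      rw [hginv]
      simp only [Matrix.smul_apply, smul_eq_mul]
      rw [hpdg, hpdg, hpdg]
      field_simp
      ring
    unfold christoffel
    rw [Finset.sum_congr rfl (fun m _ => hterm m), Finset.sum_add_distrib, ← Finset.mul_sum]
    simp only [Finset.sum_sub_distrib, Finset.sum_add_distrib, ← Finset.mul_sum,
      ← Finset.sum_mul, hδ]
    ring
  -- sum of Christoffels against ω
  have hΓω : ∑ k, christoffel g k i j x * ω k x
      = (∑ k, christoffel gt k i j x * ω k x)
        + (a x)⁻¹ * (pd i a x * ω j x + pd j a x * ω i x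
          - gt x i j * ∑ k, (∑ m, (gt x)⁻¹ k m * pd m a x) * ω k x) := by
    rw [Finset.sum_congr rfl (fun k _ => by rw [hChr k])]
    have e : ∀ k : Fin n, (christoffel gt k i j x +
        (a x)⁻¹ * (pd i a x * (if k = j then (1:ℝ) else 0)
          + pd j a x * (if k = i then (1:ℝ) else 0)
          - gt x i j * ∑ m, (gt x)⁻¹ k m * pd m a x)) * ω k x
        = christoffel gt k i j x * ω k x
          + ((a x)⁻¹ * pd i a x) * ((if k = j then (1:ℝ) else 0) * ω k x)
          + ((a x)⁻¹ * pd j a x) * ((if k = i then (1:ℝ) else 0) * ω k x)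
          - ((a x)⁻¹ * gt x i j) * ((∑ m, (gt x)⁻¹ k m * pd m a x) * ω k x) :=
      fun k => by ring
    rw [Finset.sum_congr rfl (fun k _ => e k)]
    simp only [Finset.sum_sub_distrib, Finset.sum_add_distrib, ← Finset.mul_sum,
      ite_mul, one_mul, zero_mul, Finset.sum_ite_eq', Finset.mem_univ, if_true]
    ring
  -- derivative of ωt
  have hpdsq : ∀ l, pd l (fun y => (a y)^2) x = 2 * a x * pd l a x := by
    intro l
    rw [show (fun y => (a y)^2) = fun y => a y * a y from funext fun y => by ring,
      pd_mul l (hf := ha') (hh := ha')]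
    ring
  have hpdωt : ∀ l k, pd l (ωt k) x
      = ((a x)^2)⁻¹ * pd l (ω k) x - 2 * ((a x)^3)⁻¹ * pd l a x * ω k x := by
    intro l k
    have e : ωt k = fun y => ((a y)^2)⁻¹ * ω k y := funext fun y => hωt k y
    have hinv : DifferentiableAt ℝ (fun y => ((a y)^2)⁻¹) x := (ha'.pow 2).inv hA2
    rw [e, pd_mul l (hf := hinv) (hh := hω' k),
      pd_inv l (f := fun y => a y ^ 2) (hf := ha'.pow 2) (hfx := hA2), hpdsq l]
    field_simp
    ring
  -- sum of tilde-Christoffels against ωt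
  have hΓt : ∑ k, christoffel gt k i j x * ωt k x
      = ((a x)^2)⁻¹ * ∑ k, christoffel gt k i j x * ω k x := by
    rw [Finset.mul_sum]
    exact Finset.sum_congr rfl fun k _ => by rw [hωt]; ring
  -- rewrite ct
  have hct' : ct x = c x + ((a x)^3)⁻¹ * ∑ k, (∑ m, (gt x)⁻¹ k m * pd m a x) * ω k x := by
    rw [hct]
    congr 1
    rw [Finset.mul_sum]
    refine Finset.sum_congr rfl fun k _ => ?_
    conv_rhs => rw [Finset.sum_mul, Finset.mul_sum]
    refine Finset.sum_congr rfl fun m _ => ?_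
    rw [hωt, pd_log m (hf := ha') (hfx := hA)]
    field_simp
  have hgij : g x i j = (a x)^2 * gt x i j := by
    rw [hg]; simp only [Matrix.smul_apply, smul_eq_mul]
  simp only [symDer]
  rw [hgij, hΓω, hΓt, hpdωt i j, hpdωt j i, hct']
  field_simp
  ring
end
end

section
/- For all compactly supported smooth symmetric 2-tensor fields f = (f_{lm}) and h = (h_{jk}) on ℝ⁴, the L² pairing of their light ray transforms satisfies ∫_{S²} ∫_{ℝ³} Lf(y,v) · Lh(y,v) dy dℋ²(v) = ∫_{S²} ∫_ℝ ∫_{ℝ⁴} Σ_{j,k,l,m} f_{lm}(x⁰ − ρ, x' − ρ v) h_{jk}(x) θ^j θ^k θ^l θ^m dx dρ dℋ²(v), where θ = (1,v) and ℋ² is the surface measure on S². -/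
open MeasureTheory
open scoped Real

noncomputable section

/-- Euclidean `ℝ³`. -/
abbrev E3 := EuclideanSpace ℝ (Fin 3)

/-- Minkowski space `ℝ⁴ = ℝ × ℝ³`, points written `x = (x⁰, x')`. -/
abbrev M4 := ℝ × E3

/-- The unit sphere `S² ⊆ ℝ³`. -/
def sphere2 : Set E3 := Metric.sphere 0 1

/-- The lightlike direction `θ = (1, v) ∈ ℝ⁴` as a 4-vector of components. -/
def thvec (v : E3) : Fin 4 → ℝ := Fin.cons 1 (fun i => v i)

/-- The components `(ξ₀, ξ')` of a covector as a 4-vector. -/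
def xiVec (ξ : M4) : Fin 4 → ℝ := Fin.cons ξ.1 (fun i => ξ.2 i)

/-- The Minkowski metric `η = diag(-1,1,1,1)` (its own inverse). -/
def eta4 : Fin 4 → Fin 4 → ℝ := fun i j => if i = j then (if i = 0 then -1 else 1) else 0

/-- The circle `S¹_ξ = {v ∈ S² : ξ₀ + ξ'·v = 0}`. -/
def S1xi (ξ : M4) : Set E3 := {v | ‖v‖ = 1 ∧ ξ.1 + (inner ℝ ξ.2 v : ℝ) = 0}

/-- The light ray transform of a symmetric 2-tensor field on `ℝ⁴`. -/
def Lray (f : Fin 4 → Fin 4 → M4 → ℝ) (y v : E3) : ℝ :=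
  ∫ s : ℝ, ∑ l, ∑ m, f l m (s, y + s • v) * thvec v l * thvec v m

/- Auxiliary lemmas -/

lemma hcs_comp_left_inv {X Y : Type*} [TopologicalSpace X] [TopologicalSpace Y]
    {F : Y → ℝ} (hF : HasCompactSupport F) {g : X → Y} (hg : Continuous g)
    {l : Y → X} (hl : Continuous l) (hlg : ∀ x, l (g x) = x) :
    HasCompactSupport (fun x => F (g x)) := by
  have h1 : Function.support (fun x => F (g x)) ⊆ g ⁻¹' (tsupport F) := by
    intro x hx
    exact subset_tsupport F hx
  have h2 : IsClosed (g ⁻¹' tsupport F) := (isClosed_tsupport F).preimage hg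
  have h3 : tsupport (fun x => F (g x)) ⊆ g ⁻¹' tsupport F := closure_minimal h1 h2
  refine IsCompact.of_isClosed_subset (hF.image hl) (isClosed_tsupport _) ?_
  exact fun x hx => ⟨g x, h3 hx, hlg x⟩

lemma hcs_mul_prod {X Y : Type*} [TopologicalSpace X] [TopologicalSpace Y]
    {F : X → ℝ} {H : Y → ℝ} (hF : HasCompactSupport F) (hH : HasCompactSupport H) :
    HasCompactSupport (fun p : X × Y => F p.1 * H p.2) := by
  have h1 : Function.support (fun p : X × Y => F p.1 * H p.2) ⊆
      (tsupport F) ×ˢ (tsupport H) := by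
    intro p hp
    have hp1 : F p.1 ≠ 0 := fun h => hp (by simp [h])
    have hp2 : H p.2 ≠ 0 := fun h => hp (by simp [h])
    exact ⟨subset_tsupport F hp1, subset_tsupport H hp2⟩
  refine IsCompact.of_isClosed_subset (hF.prod hH) (isClosed_tsupport _) ?_
  exact closure_minimal h1 ((isClosed_tsupport F).prod (isClosed_tsupport H))

lemma hcs_finsetSum {ι X : Type*} [TopologicalSpace X] (s : Finset ι) (g : ι → X → ℝ)
    (hg : ∀ i ∈ s, HasCompactSupport (g i)) :
    HasCompactSupport (fun x => ∑ i ∈ s, g i x) := by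
  classical
  induction s using Finset.induction_on with
  | empty => simpa [HasCompactSupport, tsupport] using isCompact_empty
  | @insert a s ha ih =>
    simp only [Finset.sum_insert ha]
    exact (hg a (Finset.mem_insert_self a s)).add
      (ih fun i hi => hg i (Finset.mem_insert_of_mem hi))

instance : IsFiniteMeasureOnCompacts (volume : Measure (ℝ × (ℝ × E3))) :=
  Measure.prod.instIsFiniteMeasureOnCompacts _ _

lemma key_pairing (v : E3) (F H : M4 → ℝ)
    (hFcont : Continuous F) (hFc : HasCompactSupport F)
    (hHcont : Continuous H) (hHc : HasCompactSupport H) :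
    (∫ y : E3, (∫ s : ℝ, F (s, y + s • v)) * (∫ t : ℝ, H (t, y + t • v)))
      = ∫ ρ : ℝ, ∫ x : M4, F (x.1 - ρ, x.2 - ρ • v) * H x := by
  set Φ : E3 × (ℝ × ℝ) → ℝ :=
    fun z => F (z.2.1, z.1 + z.2.1 • v) * H (z.2.2, z.1 + z.2.2 • v) with hΦdef
  set W : (ℝ × ℝ) × E3 → ℝ :=
    fun z => F (z.1.1, z.2 + (z.1.1 - z.1.2) • v) * H (z.1.2, z.2) with hWdef
  set U : ℝ × M4 → ℝ :=
    fun z => F (z.2.1 - z.1, z.2.2 - z.1 • v) * H z.2 with hUdef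
  have hPc : Continuous fun p : M4 × M4 => F p.1 * H p.2 :=
    (hFcont.comp continuous_fst).mul (hHcont.comp continuous_snd)
  have hPs : HasCompactSupport fun p : M4 × M4 => F p.1 * H p.2 := hcs_mul_prod hFc hHc
  have hΦi : Integrable Φ := by
    have hg : Continuous (fun z : E3 × (ℝ × ℝ) =>
        ((z.2.1, z.1 + z.2.1 • v), (z.2.2, z.1 + z.2.2 • v)) : _ → M4 × M4) := by fun_prop
    have hl : Continuous (fun p : M4 × M4 => (p.1.2 - p.1.1 • v, (p.1.1, p.2.1))) := by fun_prop
    exact (hPc.comp hg).integrable_of_hasCompactSupport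
      (hcs_comp_left_inv hPs hg hl (fun z => by simp))
  have hWi : Integrable W := by
    have hg : Continuous (fun z : (ℝ × ℝ) × E3 =>
        ((z.1.1, z.2 + (z.1.1 - z.1.2) • v), (z.1.2, z.2)) : _ → M4 × M4) := by fun_prop
    have hl : Continuous (fun p : M4 × M4 => ((p.1.1, p.2.1), p.2.2)) := by fun_prop
    exact (hPc.comp hg).integrable_of_hasCompactSupport
      (hcs_comp_left_inv hPs hg hl (fun z => by simp))
  have hUi : Integrable U := by
    have hg : Continuous (fun z : ℝ × M4 =>
        ((z.2.1 - z.1, z.2.2 - z.1 • v), z.2) : _ → M4 × M4) := by fun_prop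
    have hl : Continuous (fun p : M4 × M4 => (p.2.1 - p.1.1, p.2)) := by fun_prop
    exact (hPc.comp hg).integrable_of_hasCompactSupport
      (hcs_comp_left_inv hPs hg hl (fun z => by simp))
  have h1 : ∀ y : E3,
      (∫ s : ℝ, F (s, y + s • v)) * (∫ t : ℝ, H (t, y + t • v))
        = ∫ q : ℝ × ℝ, Φ (y, q) := by
    intro y
    rw [Measure.volume_eq_prod, integral_prod_mul (fun s : ℝ => F (s, y + s • v))
      (fun t : ℝ => H (t, y + t • v))]
  calc
    (∫ y : E3, (∫ s : ℝ, F (s, y + s • v)) * (∫ t : ℝ, H (t, y + t • v)))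
        = ∫ y : E3, ∫ q : ℝ × ℝ, Φ (y, q) :=
          integral_congr_ae (Filter.Eventually.of_forall h1)
    _ = ∫ q : ℝ × ℝ, ∫ y : E3, Φ (y, q) := by
          apply integral_integral_swap
          rw [← Measure.volume_eq_prod]
          exact hΦi
    _ = ∫ q : ℝ × ℝ, ∫ y : E3, W (q, y) := by
          refine integral_congr_ae (Filter.Eventually.of_forall fun q => ?_)
          show (∫ y : E3, Φ (y, q)) = ∫ y : E3, W (q, y)
          have he : (fun y : E3 => Φ (y, q)) = fun y => W ((q.1, q.2), y + q.2 • v) := by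
            funext y
            simp only [hΦdef, hWdef]
            congr 2
            rw [add_assoc, ← add_smul]
            congr 1
            ring_nf
          rw [he]
          exact integral_add_right_eq_self (μ := volume) (fun y : E3 => W ((q.1, q.2), y)) (q.2 • v)
    _ = ∫ z : (ℝ × ℝ) × E3, W z := by
          rw [Measure.volume_eq_prod]
          exact (integral_prod W (by rwa [← Measure.volume_eq_prod])).symm
    _ = ∫ z : ℝ × (ℝ × E3), U z := by
          have hThom : Continuous (fun z : ℝ × (ℝ × E3) => ((z.2.1 - z.1, z.2.1), z.2.2)) := by
            fun_prop
          have hTinv : Continuous (fun p : (ℝ × ℝ) × E3 => (p.1.2 - p.1.1, (p.1.2, p.2))) := by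
            fun_prop
          set T : ℝ × (ℝ × E3) ≃ₜ (ℝ × ℝ) × E3 :=
            { toFun := fun z => ((z.2.1 - z.1, z.2.1), z.2.2)
              invFun := fun p => (p.1.2 - p.1.1, (p.1.2, p.2))
              left_inv := fun z => by simp
              right_inv := fun p => by simp
              continuous_toFun := hThom
              continuous_invFun := hTinv } with hTdef
          have mpS : MeasurePreserving (fun p : ℝ × ℝ => (p.2 - p.1, p.2))
              (volume : Measure (ℝ × ℝ)) volume := by
            rw [Measure.volume_eq_prod]
            have m1 : MeasurePreserving (fun p : ℝ × ℝ => (-p.1, p.2))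
                ((volume : Measure ℝ).prod volume) ((volume : Measure ℝ).prod volume) :=
              (Measure.measurePreserving_neg _).prod (MeasurePreserving.id _)
            have m2 := measurePreserving_add_prod (volume : Measure ℝ) (volume : Measure ℝ)
            have heq : (fun p : ℝ × ℝ => (p.2 - p.1, p.2))
                = (fun z : ℝ × ℝ => (z.1 + z.2, z.2)) ∘ (fun p : ℝ × ℝ => (-p.1, p.2)) := by
              funext p
              simp [sub_eq_neg_add]
            rw [heq]
            exact m2.comp m1
          have mpA : MeasurePreserving
              (MeasurableEquiv.prodAssoc.symm : ℝ × (ℝ × E3) ≃ᵐ (ℝ × ℝ) × E3)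
              volume volume :=
            (volume_preserving_prodAssoc (α₁ := ℝ) (β₁ := ℝ) (γ₁ := E3)).symm _
          have mpSid : MeasurePreserving
              (Prod.map (fun p : ℝ × ℝ => (p.2 - p.1, p.2)) (id : E3 → E3))
              (volume : Measure ((ℝ × ℝ) × E3)) volume := by
            rw [Measure.volume_eq_prod]
            exact mpS.prod (MeasurePreserving.id _)
          have mpT : MeasurePreserving (T : ℝ × (ℝ × E3) → (ℝ × ℝ) × E3) volume volume := by
            have hfeq : (T : ℝ × (ℝ × E3) → (ℝ × ℝ) × E3)
                = (Prod.map (fun p : ℝ × ℝ => (p.2 - p.1, p.2)) (id : E3 → E3))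
                  ∘ (MeasurableEquiv.prodAssoc.symm : ℝ × (ℝ × E3) ≃ᵐ (ℝ × ℝ) × E3) := by
              funext z
              rfl
            rw [hfeq]
            exact mpSid.comp mpA
          rw [← mpT.integral_comp T.measurableEmbedding W]
          refine integral_congr_ae (Filter.Eventually.of_forall fun z => ?_)
          show W (T z) = U z
          simp only [hTdef, hWdef, hUdef, Homeomorph.homeomorph_mk_coe, Equiv.coe_fn_mk]
          congr 2
          rw [sub_sub_cancel_left, neg_smul, ← sub_eq_add_neg]
    _ = ∫ ρ : ℝ, ∫ x : M4, F (x.1 - ρ, x.2 - ρ • v) * H x := by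
          rw [Measure.volume_eq_prod]
          exact integral_prod U (by rwa [← Measure.volume_eq_prod])

lemma sum_factor (a b : Fin 4 → Fin 4 → ℝ) (c : Fin 4 → ℝ) :
    (∑ j, ∑ k, ∑ l, ∑ m, a l m * b j k * c j * c k * c l * c m)
      = (∑ l, ∑ m, a l m * c l * c m) * (∑ j, ∑ k, b j k * c j * c k) := by
  simp only [Fin.sum_univ_four]
  ring

/-- The `L²` pairing of light ray transforms:
`∫_{S²} ∫_{ℝ³} Lf·Lh dy dℋ²(v)
  = ∫_{S²} ∫_ℝ ∫_{ℝ⁴} Σ f_{lm}(x⁰−ρ, x'−ρv) h_{jk}(x) θ^j θ^k θ^l θ^m dx dρ dℋ²(v)`. -/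
theorem lightRayTransform_pairing
    (f h : Fin 4 → Fin 4 → M4 → ℝ)
    (hfs : ∀ l m, ContDiff ℝ (⊤ : ℕ∞) (f l m)) (hfc : ∀ l m, HasCompactSupport (f l m))
    (hfsym : ∀ l m, f l m = f m l)
    (hhs : ∀ l m, ContDiff ℝ (⊤ : ℕ∞) (h l m)) (hhc : ∀ l m, HasCompactSupport (h l m))
    (hhsym : ∀ l m, h l m = h m l) :
    ∫ v in sphere2, (∫ y : E3, Lray f y v * Lray h y v) ∂μH[2]
      = ∫ v in sphere2,
          (∫ ρ : ℝ, ∫ x : M4, ∑ j, ∑ k, ∑ l, ∑ m,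
            f l m (x.1 - ρ, x.2 - ρ • v) * h j k x *
              thvec v j * thvec v k * thvec v l * thvec v m) ∂μH[2] := by
  have hmain : ∀ v : E3,
      (∫ y : E3, Lray f y v * Lray h y v)
        = ∫ ρ : ℝ, ∫ x : M4, ∑ j, ∑ k, ∑ l, ∑ m,
            f l m (x.1 - ρ, x.2 - ρ • v) * h j k x *
              thvec v j * thvec v k * thvec v l * thvec v m := by
    intro v
    set F : M4 → ℝ := fun x => ∑ l, ∑ m, f l m x * thvec v l * thvec v m with hFdef
    set H : M4 → ℝ := fun x => ∑ l, ∑ m, h l m x * thvec v l * thvec v m with hHdef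
    have hFcont : Continuous F := by
      refine continuous_finset_sum _ fun l _ => continuous_finset_sum _ fun m _ => ?_
      exact ((hfs l m).continuous.mul continuous_const).mul continuous_const
    have hHcont : Continuous H := by
      refine continuous_finset_sum _ fun l _ => continuous_finset_sum _ fun m _ => ?_
      exact ((hhs l m).continuous.mul continuous_const).mul continuous_const
    have hFc : HasCompactSupport F := by
      refine hcs_finsetSum _ _ fun l _ => hcs_finsetSum _ _ fun m _ => ?_
      exact ((hfc l m).mul_right).mul_right
    have hHc : HasCompactSupport H := by
      refine hcs_finsetSum _ _ fun l _ => hcs_finsetSum _ _ fun m _ => ?_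
      exact ((hhc l m).mul_right).mul_right
    calc
      (∫ y : E3, Lray f y v * Lray h y v)
          = ∫ y : E3, (∫ s : ℝ, F (s, y + s • v)) * (∫ t : ℝ, H (t, y + t • v)) := rfl
      _ = ∫ ρ : ℝ, ∫ x : M4, F (x.1 - ρ, x.2 - ρ • v) * H x :=
          key_pairing v F H hFcont hFc hHcont hHc
      _ = ∫ ρ : ℝ, ∫ x : M4, ∑ j, ∑ k, ∑ l, ∑ m,
            f l m (x.1 - ρ, x.2 - ρ • v) * h j k x *
              thvec v j * thvec v k * thvec v l * thvec v m := by
          refine integral_congr_ae (Filter.Eventually.of_forall fun ρ => ?_)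
          refine integral_congr_ae (Filter.Eventually.of_forall fun x => ?_)
          show F (x.1 - ρ, x.2 - ρ • v) * H x = _
          rw [hFdef, hHdef]
          exact (sum_factor (fun l m => f l m (x.1 - ρ, x.2 - ρ • v)) (fun j k => h j k x)
            (thvec v)).symm
  simp only [hmain]
end
end
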